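/- Let r : [0,1]² → (0,1) be measurable with log r and log(1-r) integrable. If (f_n) is a sequence of measurable functions [0,1]² → [0,1] converging to f in L², then I_r(f_n) → I_r(f), where I_r(h) = ∫ R(h(x,y) | r(x,y)) dx dy. -/

import Mathlib

open MeasureTheory

noncomputable def Rent (a b : ℝ) : ℝ :=
  a * Real.log (a / b) + (1 - a) * Real.log ((1 - a) / (1 - b))

noncomputable def sqMeasure : Measure (ℝ × ℝ) :=
  volume.restrict (Set.Icc (0:ℝ) 1 ×ˢ Set.Icc (0:ℝ) 1)

lemma Rent_eq {a b : ℝ} (hb : b ≠ 0) (hb' : b ≠ 1) :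
    Rent a b = a * Real.log a + (1 - a) * Real.log (1 - a)
      - a * Real.log b - (1 - a) * Real.log (1 - b) := by
  have h1 : a * Real.log (a / b) = a * Real.log a - a * Real.log b := by
    rcases eq_or_ne a 0 with h | h
    · simp [h]
    · rw [Real.log_div h hb]; ring
  have h2 : (1 - a) * Real.log ((1 - a) / (1 - b))
      = (1 - a) * Real.log (1 - a) - (1 - a) * Real.log (1 - b) := by
    rcases eq_or_ne (1 - a) 0 with h | h
    · simp [h]
    · rw [Real.log_div h (sub_ne_zero.mpr (Ne.symm hb'))]; ring
  rw [Rent, h1, h2]; ring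

lemma Rent_continuous {b : ℝ} (hb : b ≠ 0) (hb' : b ≠ 1) :
    Continuous fun a => Rent a b := by
  have : (fun a => Rent a b) = fun a => a * Real.log a + (1 - a) * Real.log (1 - a)
      - a * Real.log b - (1 - a) * Real.log (1 - b) := funext fun a => Rent_eq hb hb'
  rw [this]
  exact ((Real.continuous_mul_log.add
      (Real.continuous_mul_log.comp (continuous_const.sub continuous_id))).sub
      (continuous_id.mul continuous_const)).sub
      ((continuous_const.sub continuous_id).mul continuous_const)

lemma xlogx_abs_le {a : ℝ} (h0 : 0 ≤ a) (h1 : a ≤ 1) : |a * Real.log a| ≤ 1 := by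
  rcases eq_or_lt_of_le h0 with h | h
  · simp [← h]
  · rw [mul_comm]
    exact (Real.abs_log_mul_self_lt a h h1).le

lemma Rent_abs_le {a b : ℝ} (ha : a ∈ Set.Icc (0:ℝ) 1) (hb : b ∈ Set.Ioo (0:ℝ) 1) :
    |Rent a b| ≤ 2 + |Real.log b| + |Real.log (1 - b)| := by
  rw [Rent_eq hb.1.ne' hb.2.ne]
  have h1 : |a * Real.log a| ≤ 1 := xlogx_abs_le ha.1 ha.2
  have h2 : |(1 - a) * Real.log (1 - a)| ≤ 1 :=
    xlogx_abs_le (by linarith [ha.2]) (by linarith [ha.1])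
  have h3 : |a * Real.log b| ≤ |Real.log b| := by
    rw [abs_mul]
    calc |a| * |Real.log b| ≤ 1 * |Real.log b| := by
          apply mul_le_mul_of_nonneg_right _ (abs_nonneg _)
          rw [abs_of_nonneg ha.1]; exact ha.2
      _ = |Real.log b| := one_mul _
  have h4 : |(1 - a) * Real.log (1 - b)| ≤ |Real.log (1 - b)| := by
    rw [abs_mul]
    calc |1 - a| * |Real.log (1 - b)| ≤ 1 * |Real.log (1 - b)| := by
          apply mul_le_mul_of_nonneg_right _ (abs_nonneg _)
          rw [abs_of_nonneg (by linarith [ha.2])]; linarith [ha.1]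
      _ = |Real.log (1 - b)| := one_mul _
  calc |a * Real.log a + (1 - a) * Real.log (1 - a) - a * Real.log b - (1 - a) * Real.log (1 - b)|
      ≤ |a * Real.log a + (1 - a) * Real.log (1 - a) - a * Real.log b|
        + |(1 - a) * Real.log (1 - b)| := abs_sub _ _
    _ ≤ (|a * Real.log a + (1 - a) * Real.log (1 - a)| + |a * Real.log b|)
        + |(1 - a) * Real.log (1 - b)| := by
          gcongr; exact abs_sub _ _
    _ ≤ ((|a * Real.log a| + |(1 - a) * Real.log (1 - a)|) + |a * Real.log b|)
        + |(1 - a) * Real.log (1 - b)| := by gcongr; exact abs_add_le _ _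
    _ ≤ ((1 + 1) + |Real.log b|) + |Real.log (1 - b)| := by gcongr
    _ = 2 + |Real.log b| + |Real.log (1 - b)| := by ring

lemma Rent_measurable {h r : ℝ × ℝ → ℝ} (hm : Measurable h) (hrm : Measurable r) :
    Measurable fun p => Rent (h p) (r p) := by
  unfold Rent
  exact (hm.mul (Real.measurable_log.comp (hm.div hrm))).add
    ((measurable_const.sub hm).mul
      (Real.measurable_log.comp ((measurable_const.sub hm).div (measurable_const.sub hrm))))

theorem I_r_continuous_L2
    (r : ℝ × ℝ → ℝ) (hrm : Measurable r)
    (hr : ∀ p ∈ Set.Icc (0:ℝ) 1 ×ˢ Set.Icc (0:ℝ) 1, r p ∈ Set.Ioo (0:ℝ) 1)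
    (hlogr : Integrable (fun p => Real.log (r p)) sqMeasure)
    (hlogr' : Integrable (fun p => Real.log (1 - r p)) sqMeasure)
    (f : ℕ → ℝ × ℝ → ℝ) (hfm : ∀ n, Measurable (f n))
    (hf01 : ∀ n, ∀ p ∈ Set.Icc (0:ℝ) 1 ×ˢ Set.Icc (0:ℝ) 1, f n p ∈ Set.Icc (0:ℝ) 1)
    (g : ℝ × ℝ → ℝ) (hgm : Measurable g)
    (hg01 : ∀ p ∈ Set.Icc (0:ℝ) 1 ×ˢ Set.Icc (0:ℝ) 1, g p ∈ Set.Icc (0:ℝ) 1)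
    (hL2 : Filter.Tendsto (fun n => ∫ p, (f n p - g p)^2 ∂sqMeasure)
      Filter.atTop (nhds 0)) :
    Filter.Tendsto (fun n => ∫ p, Rent (f n p) (r p) ∂sqMeasure)
      Filter.atTop (nhds (∫ p, Rent (g p) (r p) ∂sqMeasure)) := by
  set S : Set (ℝ × ℝ) := Set.Icc (0:ℝ) 1 ×ˢ Set.Icc (0:ℝ) 1 with hS_def
  have hS : MeasurableSet S := measurableSet_Icc.prod measurableSet_Icc
  have hmem : ∀ᵐ p ∂sqMeasure, p ∈ S := ae_restrict_mem hS
  haveI : IsFiniteMeasure sqMeasure := by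
    constructor
    have : sqMeasure Set.univ = volume S := by
      rw [sqMeasure, Measure.restrict_apply_univ]
    rw [this]
    exact (isCompact_Icc.prod isCompact_Icc).measure_lt_top
  -- integrability of squares
  have hsq : ∀ n, Integrable (fun p => (f n p - g p)^2) sqMeasure := by
    intro n
    refine (integrable_const (1:ℝ)).mono'
      (((hfm n).sub hgm).pow_const 2).aestronglyMeasurable ?_
    filter_upwards [hmem] with p hp
    have hf := hf01 n p hp
    have hg := hg01 p hp
    rw [Real.norm_eq_abs, abs_of_nonneg (sq_nonneg _)]
    nlinarith [hf.1, hf.2, hg.1, hg.2]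
  -- L2 norm tendsto 0
  have heLp : Filter.Tendsto (fun n => eLpNorm (f n - g) 2 sqMeasure) Filter.atTop (nhds 0) := by
    have key : ∀ n, eLpNorm (f n - g) 2 sqMeasure
        = (ENNReal.ofReal (∫ p, (f n p - g p)^2 ∂sqMeasure)) ^ (1/2 : ℝ) := by
      intro n
      rw [eLpNorm_eq_lintegral_rpow_enorm_toReal two_ne_zero ENNReal.ofNat_ne_top]
      have ht : (2 : ENNReal).toReal = 2 := by simp
      rw [ht]
      congr 1
      rw [ofReal_integral_eq_lintegral_ofReal (hsq n)
        (Filter.Eventually.of_forall fun p => sq_nonneg _)]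
      refine lintegral_congr fun p => ?_
      rw [Pi.sub_apply, Real.enorm_eq_ofReal_abs,
        ENNReal.ofReal_rpow_of_nonneg (abs_nonneg _) (by norm_num)]
      congr 1
      rw [Real.rpow_two, sq_abs]
    simp_rw [key]
    have h0 : Filter.Tendsto (fun n => ENNReal.ofReal (∫ p, (f n p - g p)^2 ∂sqMeasure))
        Filter.atTop (nhds 0) := by
      rw [← ENNReal.ofReal_zero]
      exact (ENNReal.continuous_ofReal.tendsto 0).comp hL2
    have := (ENNReal.continuous_rpow_const (y := 1/2)).tendsto 0 |>.comp h0
    simpa [ENNReal.zero_rpow_of_pos, Function.comp_def] using this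
  have hmeas_in : TendstoInMeasure sqMeasure f Filter.atTop g :=
    tendstoInMeasure_of_tendsto_eLpNorm two_ne_zero
      (fun n => (hfm n).aestronglyMeasurable) hgm.aestronglyMeasurable heLp
  -- subsequence argument
  apply Filter.tendsto_of_subseq_tendsto
  intro ns hns
  have hsub : TendstoInMeasure sqMeasure (fun i => f (ns i)) Filter.atTop g :=
    fun ε hε => (hmeas_in ε hε).comp hns
  obtain ⟨ms, -, hae⟩ := hsub.exists_seq_tendsto_ae
  refine ⟨ms, ?_⟩
  apply tendsto_integral_of_dominated_convergence
    (fun p => 2 + |Real.log (r p)| + |Real.log (1 - r p)|)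
  · exact fun k => (Rent_measurable (hfm _) hrm).aestronglyMeasurable
  · exact ((integrable_const (2:ℝ)).add hlogr.abs).add hlogr'.abs
  · intro k
    filter_upwards [hmem] with p hp
    rw [Real.norm_eq_abs]
    exact Rent_abs_le (hf01 _ p hp) (hr p hp)
  · filter_upwards [hmem, hae] with p hp hT
    exact ((Rent_continuous (hr p hp).1.ne' (hr p hp).2.ne).tendsto (g p)).comp hT
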